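/- Let q be a prime power, F_q a finite field with q elements, let K ≥ 1, N_S ≥ K, N_R ≥ 0 be integers and ε_SR, ε_RD ∈ [0,1]. Consider the two-hop (single relay, no direct source–destination link) random experiment: C is a uniformly random N_S×K matrix over F_q; each row of C is received by the relay independently with probability 1−ε_SR, giving the set A ⊆ {1,…,N_S}; independently, G is a uniformly random N_R×|A| matrix over F_q; each of the N_R recoded packets is received by the destination independently with probability 1−ε_RD, giving the set D' ⊆ {1,…,N_R}. Then the probability that the matrix (G)_{D'} · C_A (the rows of G indexed by D' times the rows of C indexed by A) has rank K equals [∑_{m=K}^{N_S} B(m, N_S, ε_SR) P(m, K)] · [∑_{m'=K}^{N_R} B(m', N_R, ε_RD) P(m', K)]. -/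

import Mathlib

open Finset

/-- `P(m,K) = ∏_{i=0}^{K-1} (1 - q^{i-m})`. -/
noncomputable def Pfr (q m K : ℕ) : ℝ :=
  ∏ i ∈ Finset.range K, (1 - (q : ℝ) ^ ((i : ℤ) - (m : ℤ)))

/-- Binomial probability `B(m,N,ε) = C(N,m) (1-ε)^m ε^{N-m}`. -/
noncomputable def Bpmf (m N : ℕ) (ε : ℝ) : ℝ :=
  (N.choose m : ℝ) * (1 - ε) ^ m * ε ^ (N - m)

open Function

set_option linter.unusedSectionVars false


section Aux
variable {F : Type} [Field F] [Fintype F] [DecidableEq F]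

omit [Field F] [DecidableEq F] in
lemma card_matrix_aux (m n : Type*) [Fintype m] [Fintype n] [DecidableEq m] [DecidableEq n] :
    Fintype.card (Matrix m n F) = Fintype.card F ^ (Fintype.card m * Fintype.card n) := by
  rw [Fintype.card_congr (Matrix.of : (m → n → F) ≃ _).symm, Fintype.card_fun,
    Fintype.card_fun, ← pow_mul, mul_comm]

lemma fiber_card_eq {X Y : Type*} [AddCommGroup X] [AddCommGroup Y] [Fintype X] [DecidableEq Y]
    (φ : X →+ Y) (hs : Function.Surjective φ) (y : Y) :
    (univ.filter fun x => φ x = y).card = (univ.filter fun x => φ x = 0).card := by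
  apply Finset.card_bij (fun x _ => x - (hs y).choose)
  · intro a ha
    simp only [mem_filter, mem_univ, true_and] at ha ⊢
    rw [map_sub, ha, (hs y).choose_spec, sub_self]
  · intro a _ b _ h
    exact sub_left_injective h
  · intro b hb
    refine ⟨b + (hs y).choose, ?_, by simp⟩
    simp only [mem_filter, mem_univ, true_and] at hb ⊢
    rw [map_add, hb, (hs y).choose_spec, zero_add]

lemma card_filter_comp {X Y : Type*} [AddCommGroup X] [AddCommGroup Y] [Fintype X] [Fintype Y]
    [DecidableEq Y] (φ : X →+ Y) (hs : Function.Surjective φ)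
    (p : Y → Prop) [DecidablePred p] :
    (univ.filter fun x => p (φ x)).card * Fintype.card Y
      = Fintype.card X * (univ.filter p).card := by
  set c := (univ.filter fun x => (φ : X → Y) x = 0).card with hc
  have key : ∀ y : Y, ((univ.filter fun x => p (φ x)).filter fun x => φ x = y).card
      = if p y then c else 0 := by
    intro y
    split_ifs with hy
    · rw [hc, ← fiber_card_eq φ hs y]
      congr 1
      ext x
      simp only [mem_filter, mem_univ, true_and, and_iff_right_iff_imp]
      intro h; rw [h]; exact hy
    · rw [Finset.card_eq_zero, Finset.filter_eq_empty_iff]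
      rintro x hx rfl
      exact hy (Finset.mem_filter.mp hx).2
  have h1 : (univ.filter fun x => p (φ x)).card = (univ.filter p).card * c := by
    rw [Finset.card_eq_sum_card_fiberwise (f := φ) (t := univ.filter p)
        (fun x hx => by simpa using hx)]
    rw [Finset.sum_congr rfl (fun y hy => by
      rw [key y, if_pos (Finset.mem_filter.mp hy).2]), Finset.sum_const, smul_eq_mul]
  have h2 : Fintype.card X = Fintype.card Y * c := by
    have := Finset.card_eq_sum_card_fiberwise (f := (φ : X → Y)) (s := univ) (t := univ)
      (fun x _ => mem_univ _)
    rw [← Finset.card_univ, this,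
      Finset.sum_congr rfl (fun y _ => fiber_card_eq φ hs y), Finset.sum_const, smul_eq_mul,
      Finset.card_univ, ← hc]
  rw [h1, h2]; ring

lemma submatrix_surjective {α β α' β' : Type*} (f : α' → α) (g : β' → β)
    (hf : Function.Injective f) (hg : Function.Injective g) :
    Function.Surjective (fun M : Matrix α β F => M.submatrix f g) := by
  classical
  intro B
  refine ⟨Matrix.of fun i j =>
    if h : (∃ i', f i' = i) ∧ (∃ j', g j' = j) then B h.1.choose h.2.choose else 0, ?_⟩
  ext i' j'
  have h : (∃ i'', f i'' = f i') ∧ (∃ j'', g j'' = g j') := ⟨⟨i', rfl⟩, ⟨j', rfl⟩⟩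
  simp only [Matrix.submatrix_apply, Matrix.of_apply, dif_pos h]
  rw [show h.1.choose = i' from hf h.1.choose_spec, show h.2.choose = j' from hg h.2.choose_spec]

/-- submatrix as an `AddMonoidHom`. -/
def submatrixHom {α β α' β' : Type*} (f : α' → α) (g : β' → β) :
    Matrix α β F →+ Matrix α' β' F where
  toFun M := M.submatrix f g
  map_zero' := rfl
  map_add' := fun _ _ => rfl

lemma exists_left_inv {ι : Type*} [Fintype ι] [DecidableEq ι] {K : ℕ}
    (M : Matrix ι (Fin K) F) (h : M.rank = K) : ∃ L : Matrix (Fin K) ι F, L * M = 1 := by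
  have hker : LinearMap.ker M.mulVecLin = ⊥ := by
    have h1 := LinearMap.finrank_range_add_finrank_ker M.mulVecLin
    rw [Module.finrank_fintype_fun_eq_card, Fintype.card_fin] at h1
    rw [Matrix.rank] at h
    rw [← Submodule.finrank_eq_zero]
    omega
  obtain ⟨g, hg⟩ := LinearMap.exists_leftInverse_of_injective M.mulVecLin hker
  refine ⟨LinearMap.toMatrix' g, ?_⟩
  have hM : M.mulVecLin = Matrix.toLin' M := rfl
  calc LinearMap.toMatrix' g * M
      = LinearMap.toMatrix' g * LinearMap.toMatrix' (Matrix.toLin' M) := by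
        rw [LinearMap.toMatrix'_toLin']
    _ = LinearMap.toMatrix' (g ∘ₗ Matrix.toLin' M) := (LinearMap.toMatrix'_comp _ _).symm
    _ = LinearMap.toMatrix' (LinearMap.id) := by rw [← hM, hg]
    _ = 1 := LinearMap.toMatrix'_id

lemma mulRight_surjective {ι κ : Type*} [Fintype ι] [DecidableEq ι] [Fintype κ] {K : ℕ}
    (M : Matrix ι (Fin K) F) (h : M.rank = K) :
    Function.Surjective (fun H : Matrix κ ι F => H * M) := by
  obtain ⟨L, hL⟩ := exists_left_inv M h
  intro B; exact ⟨B * L, by show B * L * M = B; rw [Matrix.mul_assoc, hL, Matrix.mul_one]⟩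





lemma card_rank_nat {ι : Type*} [Fintype ι] [DecidableEq ι] (K : ℕ) :
    (univ.filter fun M : Matrix ι (Fin K) F => M.rank = K).card
      = ∏ i ∈ Finset.range K, (Fintype.card F ^ Fintype.card ι - Fintype.card F ^ i) := by
  rcases le_or_gt K (Fintype.card ι) with hK | hK
  · rw [← Fintype.card_subtype]
    have e : {M : Matrix ι (Fin K) F // M.rank = K}
        ≃ {s : Fin K → ι → F // LinearIndependent F s} := by
      refine Equiv.subtypeEquiv
        (Equiv.mk (fun M => fun j i => M i j) (fun s => Matrix.of fun i j => s j i)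
          (fun _ => rfl) (fun _ => rfl)) ?_
      intro M
      rw [Matrix.rank_eq_finrank_span_cols, linearIndependent_iff_card_eq_finrank_span,
        Fintype.card_fin, Set.finrank]
      exact eq_comm
    rw [← Nat.card_eq_fintype_card, Nat.card_congr e,
      card_linearIndependent (by rw [Module.finrank_fintype_fun_eq_card]; exact hK)]
    rw [Module.finrank_fintype_fun_eq_card]
    rw [← Fin.prod_univ_eq_prod_range]
  · have hno : ∀ M : Matrix ι (Fin K) F, ¬ (M.rank = K) := by
      intro M h
      have := M.rank_le_card_height
      omega
    rw [Finset.filter_false_of_mem (fun M _ => hno M), Finset.card_empty]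
    have hz : Fintype.card F ^ Fintype.card ι - Fintype.card F ^ (Fintype.card ι) = 0 :=
      Nat.sub_self _
    exact (Finset.prod_eq_zero (Finset.mem_range.mpr hK) hz).symm

lemma card_rank_real {ι : Type*} [Fintype ι] [DecidableEq ι] (K : ℕ) :
    ((univ.filter fun M : Matrix ι (Fin K) F => M.rank = K).card : ℝ)
      = (Fintype.card F : ℝ) ^ (Fintype.card ι * K) * Pfr (Fintype.card F) (Fintype.card ι) K := by
  have hq : 0 < Fintype.card F := Fintype.card_pos
  have hq0 : (Fintype.card F : ℝ) ≠ 0 := by positivity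
  rw [card_rank_nat]
  rcases le_or_gt K (Fintype.card ι) with hK | hK
  · rw [Nat.cast_prod]
    have step : ∀ i ∈ Finset.range K, ((Fintype.card F ^ Fintype.card ι - Fintype.card F ^ i : ℕ) : ℝ)
        = (Fintype.card F : ℝ) ^ (Fintype.card ι) * (1 - (Fintype.card F : ℝ) ^ ((i : ℤ) - (Fintype.card ι : ℤ))) := by
      intro i hi
      have hle : Fintype.card F ^ i ≤ Fintype.card F ^ Fintype.card ι :=
        Nat.pow_le_pow_right hq (le_trans (Nat.le_of_lt (Finset.mem_range.mp hi)) hK)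
      rw [Nat.cast_sub hle]
      push_cast
      rw [mul_sub, mul_one]
      congr 1
      rw [← zpow_natCast (Fintype.card F : ℝ) (Fintype.card ι), ← zpow_add₀ hq0,
        ← zpow_natCast (Fintype.card F : ℝ) i]
      congr 1
      omega
    rw [Finset.prod_congr rfl step, Finset.prod_mul_distrib, Finset.prod_const,
      Finset.card_range, ← pow_mul, Pfr]
  · rw [Finset.prod_eq_zero (f := fun i => Fintype.card F ^ Fintype.card ι - Fintype.card F ^ i)
      (Finset.mem_range.mpr hK) (Nat.sub_self _)]
    rw [Pfr, Finset.prod_eq_zero (Finset.mem_range.mpr hK)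
      (by rw [sub_self, zpow_zero, sub_self])]
    simp

/-- right multiplication as an `AddMonoidHom`. -/
def mulRightHom {ι κ : Type*} [Fintype ι] {K : ℕ} (M : Matrix ι (Fin K) F) :
    Matrix κ ι F →+ Matrix κ (Fin K) F where
  toFun H := H * M
  map_zero' := Matrix.zero_mul M
  map_add' a b := Matrix.add_mul a b M

@[simp] lemma mulRightHom_apply {ι κ : Type*} [Fintype ι] {K : ℕ} (M : Matrix ι (Fin K) F)
    (H : Matrix κ ι F) : mulRightHom (κ := κ) M H = H * M := rfl

@[simp] lemma submatrixHom_apply {α β α' β' : Type*} (f : α' → α) (g : β' → β)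
    (M : Matrix α β F) : submatrixHom (F := F) f g M = M.submatrix f g := rfl

lemma count_C {NS K : ℕ} {ι : Type*} [Fintype ι] [DecidableEq ι]
    (fA : ι → Fin NS) (hA : Function.Injective fA) :
    ((univ.filter fun C : Matrix (Fin NS) (Fin K) F => (C.submatrix fA id).rank = K).card : ℝ)
      = (Fintype.card F : ℝ) ^ (NS * K) * Pfr (Fintype.card F) (Fintype.card ι) K := by
  have h := card_filter_comp (submatrixHom (F := F) fA id)
    (submatrix_surjective fA id hA Function.injective_id)
    (p := fun B : Matrix ι (Fin K) F => B.rank = K)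
  simp only [submatrixHom_apply] at h
  rw [card_matrix_aux (Fin NS) (Fin K), card_matrix_aux ι (Fin K),
    Fintype.card_fin, Fintype.card_fin] at h
  have hr := congrArg (fun n : ℕ => (n : ℝ)) h
  push_cast at hr
  rw [card_rank_real] at hr
  have hpow : ((Fintype.card F : ℝ) ^ (Fintype.card ι * K)) ≠ 0 := by
    have : 0 < Fintype.card F := Fintype.card_pos
    positivity
  exact mul_right_cancel₀ hpow (hr.trans (by ring))

lemma count_H {K : ℕ} {ι κ : Type*} [Fintype ι] [DecidableEq ι] [Fintype κ] [DecidableEq κ]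
    (M : Matrix ι (Fin K) F) (hM : M.rank = K) :
    ((univ.filter fun H : Matrix κ ι F => (H * M).rank = K).card : ℝ)
      = (Fintype.card F : ℝ) ^ (Fintype.card κ * Fintype.card ι)
          * Pfr (Fintype.card F) (Fintype.card κ) K := by
  have h := card_filter_comp (mulRightHom (κ := κ) M) (mulRight_surjective M hM)
    (p := fun B : Matrix κ (Fin K) F => B.rank = K)
  simp only [mulRightHom_apply] at h
  rw [card_matrix_aux κ ι, card_matrix_aux κ (Fin K), Fintype.card_fin] at h
  have hr := congrArg (fun n : ℕ => (n : ℝ)) h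
  push_cast at hr
  rw [card_rank_real] at hr
  have hpow : ((Fintype.card F : ℝ) ^ (Fintype.card κ * K)) ≠ 0 := by
    have : 0 < Fintype.card F := Fintype.card_pos
    positivity
  exact mul_right_cancel₀ hpow (hr.trans (by ring))

lemma count_G {NS NR K : ℕ} {ι κ : Type*} [Fintype ι] [DecidableEq ι] [Fintype κ] [DecidableEq κ]
    (fA : ι → Fin NS) (fD : κ → Fin NR) (hA : Function.Injective fA)
    (hD : Function.Injective fD) (M : Matrix ι (Fin K) F) :
    ((univ.filter fun G : Matrix (Fin NR) (Fin NS) F =>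
        ((G.submatrix fD fA) * M).rank = K).card : ℝ)
      = if M.rank = K then (Fintype.card F : ℝ) ^ (NR * NS)
          * Pfr (Fintype.card F) (Fintype.card κ) K else 0 := by
  split_ifs with hM
  · have h := card_filter_comp (submatrixHom (F := F) fD fA)
      (submatrix_surjective fD fA hD hA)
      (p := fun H : Matrix κ ι F => (H * M).rank = K)
    simp only [submatrixHom_apply] at h
    rw [card_matrix_aux (Fin NR) (Fin NS), card_matrix_aux κ ι,
      Fintype.card_fin, Fintype.card_fin] at h
    have hr := congrArg (fun n : ℕ => (n : ℝ)) h
    push_cast at hr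
    rw [count_H M hM] at hr
    have hpow : ((Fintype.card F : ℝ) ^ (Fintype.card κ * Fintype.card ι)) ≠ 0 := by
      have : 0 < Fintype.card F := Fintype.card_pos
      positivity
    exact mul_right_cancel₀ hpow (hr.trans (by ring))
  · rw [Finset.filter_false_of_mem, Finset.card_empty]
    · norm_num
    · intro G _ hcon
      apply hM
      have h1 : M.rank ≤ K := le_trans M.rank_le_card_width (le_of_eq (Fintype.card_fin K))
      have h2 := Matrix.rank_mul_le_right (G.submatrix fD fA) M
      rw [hcon] at h2
      omega

lemma count_pair {NS NR K : ℕ} {ι κ : Type*} [Fintype ι] [DecidableEq ι] [Fintype κ]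
    [DecidableEq κ] (fA : ι → Fin NS) (fD : κ → Fin NR)
    (hA : Function.Injective fA) (hD : Function.Injective fD) :
    (∑ C : Matrix (Fin NS) (Fin K) F, ∑ G : Matrix (Fin NR) (Fin NS) F,
       if ((G.submatrix fD fA) * (C.submatrix fA id)).rank = K then (1:ℝ) else 0)
    = (Fintype.card F : ℝ)^(NS*K) * (Fintype.card F : ℝ)^(NR*NS)
        * Pfr (Fintype.card F) (Fintype.card ι) K * Pfr (Fintype.card F) (Fintype.card κ) K := by
  have step1 : ∀ C : Matrix (Fin NS) (Fin K) F,
      (∑ G : Matrix (Fin NR) (Fin NS) F,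
        if ((G.submatrix fD fA) * (C.submatrix fA id)).rank = K then (1:ℝ) else 0)
      = if (C.submatrix fA id).rank = K
          then (Fintype.card F : ℝ) ^ (NR * NS) * Pfr (Fintype.card F) (Fintype.card κ) K
          else 0 := by
    intro C
    rw [Finset.sum_boole]
    exact count_G fA fD hA hD _
  rw [Finset.sum_congr rfl (fun C _ => step1 C), ← Finset.sum_filter, Finset.sum_const,
    nsmul_eq_mul, count_C fA hA]
  ring

def boolEquiv (N : ℕ) : Finset (Fin N) ≃ (Fin N → Bool) where
  toFun s i := decide (i ∈ s)
  invFun a := univ.filter (fun i => a i = true)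
  left_inv s := by ext i; simp
  right_inv a := by funext i; simp

@[simp] lemma boolEquiv_apply (N : ℕ) (s : Finset (Fin N)) (i : Fin N) :
    boolEquiv N s i = decide (i ∈ s) := rfl

lemma bernoulli_sum (N : ℕ) (ε : ℝ) (f : ℕ → ℝ) :
    (∑ a : Fin N → Bool, (∏ i, if a i then (1-ε) else ε) * f (Fintype.card {i // a i = true}))
      = ∑ m ∈ Finset.range (N+1), Bpmf m N ε * f m := by
  classical
  set e := boolEquiv N with hedef
  have he : ∀ (s : Finset (Fin N)) (i : Fin N), e s i = decide (i ∈ s) := fun _ _ => rfl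
  rw [← Equiv.sum_comp e]
  have step : ∀ s : Finset (Fin N),
      (∏ i, if e s i then (1-ε) else ε) * f (Fintype.card {i // e s i = true})
        = (1-ε)^s.card * ε^(N - s.card) * f s.card := by
    intro s
    have h2 : Fintype.card {i // e s i = true} = s.card := by
      rw [Fintype.card_subtype]
      congr 1
      ext i
      simp [he]
    have h1 : (∏ i, if e s i then (1-ε) else ε) = (1-ε)^s.card * ε^(N - s.card) := by
      rw [Finset.prod_ite]
      simp only [Finset.prod_const]
      have hf1 : (univ.filter fun i => e s i = true) = s := by
        ext i; simp [he]
      have hf2 : (univ.filter fun i => ¬ (e s i = true)) = sᶜ := by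
        ext i; simp [he]
      rw [hf1, hf2, Finset.card_compl, Fintype.card_fin]
    rw [h1, h2]
  rw [Finset.sum_congr rfl (fun s _ => step s)]
  rw [← Finset.powerset_univ, Finset.sum_powerset]
  rw [Finset.card_univ, Fintype.card_fin]
  apply Finset.sum_congr rfl
  intro m hm
  have hps := Finset.sum_powersetCard m (univ : Finset (Fin N))
    (fun k => (1-ε)^k * ε^(N - k) * f k)
  rw [Finset.card_univ, Fintype.card_fin] at hps
  rw [hps, nsmul_eq_mul, Bpmf]
  ring

end Aux

/-- two-hop (single relay, no direct link) experiment. Sample space: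
`C` a uniformly random `N_S × K` matrix; `a : Fin N_S → Bool` the relay reception
pattern (each row received independently with probability `1-ε_SR`); `G` a uniformly
random recoding matrix (realised as a uniformly random `N_R × N_S` matrix, of which
only the columns indexed by the received set `A` are used — conditionally on `A`
these columns form a uniformly random `N_R × |A|` matrix); `d : Fin N_R → Bool` the
destination reception pattern (probability `1-ε_RD` each). The probability that
`(G)_{D'} · C_A` has rank `K` equals
`[∑_{m=K}^{N_S} B(m,N_S,ε_SR) P(m,K)] · [∑_{m'=K}^{N_R} B(m',N_R,ε_RD) P(m',K)]`. -/
theorem two_hop_decoding_prob (q : ℕ) (F : Type) [Field F] [Fintype F] [DecidableEq F]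
    (hF : Fintype.card F = q) (K NS NR : ℕ) (hK : 1 ≤ K) (hKS : K ≤ NS)
    (εSR εRD : ℝ) (hSR0 : 0 ≤ εSR) (hSR1 : εSR ≤ 1) (hRD0 : 0 ≤ εRD) (hRD1 : εRD ≤ 1) :
    ∑ ω ∈ Finset.univ.filter
        (fun ω : Matrix (Fin NS) (Fin K) F × (Fin NS → Bool) ×
            Matrix (Fin NR) (Fin NS) F × (Fin NR → Bool) =>
          (((ω.2.2.1.submatrix (fun t : {t : Fin NR // ω.2.2.2 t = true} => (t : Fin NR))
                (fun i : {i : Fin NS // ω.2.1 i = true} => (i : Fin NS))) *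
              (ω.1.submatrix (fun i : {i : Fin NS // ω.2.1 i = true} => (i : Fin NS)) id)).rank
            = K)),
      ((Fintype.card (Matrix (Fin NS) (Fin K) F) : ℝ))⁻¹ *
      ((Fintype.card (Matrix (Fin NR) (Fin NS) F) : ℝ))⁻¹ *
      (∏ i : Fin NS, (if ω.2.1 i then (1 - εSR) else εSR)) *
      (∏ t : Fin NR, (if ω.2.2.2 t then (1 - εRD) else εRD)) =
    (∑ m ∈ Finset.Icc K NS, Bpmf m NS εSR * Pfr q m K) *
    (∑ m' ∈ Finset.Icc K NR, Bpmf m' NR εRD * Pfr q m' K) := by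
  classical
  subst hF
  have hq : 0 < Fintype.card F := Fintype.card_pos
  have hq0 : (Fintype.card F : ℝ) ≠ 0 := by positivity
  -- reindexing equiv
  set Ω := Matrix (Fin NS) (Fin K) F × (Fin NS → Bool) ×
      Matrix (Fin NR) (Fin NS) F × (Fin NR → Bool) with hΩ
  let e : ((Fin NS → Bool) × (Fin NR → Bool) ×
      Matrix (Fin NS) (Fin K) F × Matrix (Fin NR) (Fin NS) F) ≃ Ω :=
    { toFun := fun x => (x.2.2.1, x.1, x.2.2.2, x.2.1)
      invFun := fun ω => (ω.2.1, ω.2.2.2, ω.1, ω.2.2.1)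
      left_inv := fun _ => rfl
      right_inv := fun _ => rfl }
  rw [Finset.sum_filter, ← Equiv.sum_comp e]
  simp only [Fintype.sum_prod_type]
  have key : ∀ (a : Fin NS → Bool) (d : Fin NR → Bool),
      (∑ C : Matrix (Fin NS) (Fin K) F, ∑ G : Matrix (Fin NR) (Fin NS) F,
        if ((G.submatrix (fun t : {t : Fin NR // d t = true} => (t : Fin NR))
              (fun i : {i : Fin NS // a i = true} => (i : Fin NS))) *
            (C.submatrix (fun i : {i : Fin NS // a i = true} => (i : Fin NS)) id)).rank = K
        then ((Fintype.card (Matrix (Fin NS) (Fin K) F) : ℝ))⁻¹ *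
             ((Fintype.card (Matrix (Fin NR) (Fin NS) F) : ℝ))⁻¹ *
             (∏ i : Fin NS, (if a i then (1 - εSR) else εSR)) *
             (∏ t : Fin NR, (if d t then (1 - εRD) else εRD))
        else 0)
      = ((∏ i : Fin NS, (if a i then (1 - εSR) else εSR)) *
          Pfr (Fintype.card F) (Fintype.card {i : Fin NS // a i = true}) K) *
        ((∏ t : Fin NR, (if d t then (1 - εRD) else εRD)) *
          Pfr (Fintype.card F) (Fintype.card {t : Fin NR // d t = true}) K) := by
    intro a d
    set w := ((Fintype.card (Matrix (Fin NS) (Fin K) F) : ℝ))⁻¹ *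
             ((Fintype.card (Matrix (Fin NR) (Fin NS) F) : ℝ))⁻¹ *
             (∏ i : Fin NS, (if a i then (1 - εSR) else εSR)) *
             (∏ t : Fin NR, (if d t then (1 - εRD) else εRD)) with hw
    have pull : (∑ C : Matrix (Fin NS) (Fin K) F, ∑ G : Matrix (Fin NR) (Fin NS) F,
        if ((G.submatrix (fun t : {t : Fin NR // d t = true} => (t : Fin NR))
              (fun i : {i : Fin NS // a i = true} => (i : Fin NS))) *
            (C.submatrix (fun i : {i : Fin NS // a i = true} => (i : Fin NS)) id)).rank = K
        then w else 0)
      = w * (∑ C : Matrix (Fin NS) (Fin K) F, ∑ G : Matrix (Fin NR) (Fin NS) F,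
        if ((G.submatrix (fun t : {t : Fin NR // d t = true} => (t : Fin NR))
              (fun i : {i : Fin NS // a i = true} => (i : Fin NS))) *
            (C.submatrix (fun i : {i : Fin NS // a i = true} => (i : Fin NS)) id)).rank = K
        then (1:ℝ) else 0) := by
      rw [Finset.mul_sum]
      refine Finset.sum_congr rfl fun C _ => ?_
      rw [Finset.mul_sum]
      refine Finset.sum_congr rfl fun G _ => ?_
      rw [mul_ite, mul_one, mul_zero]
    rw [pull, count_pair (fun i : {i : Fin NS // a i = true} => (i : Fin NS))
      (fun t : {t : Fin NR // d t = true} => (t : Fin NR))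
      Subtype.val_injective Subtype.val_injective, hw,
      card_matrix_aux (Fin NS) (Fin K), card_matrix_aux (Fin NR) (Fin NS),
      Fintype.card_fin, Fintype.card_fin, Fintype.card_fin]
    push_cast
    field_simp
  simp only [e, Equiv.coe_fn_mk]
  rw [Finset.sum_congr rfl (fun a _ => Finset.sum_congr rfl (fun d _ => key a d)),
    ← Finset.sum_mul_sum]
  have tail : ∀ (N : ℕ) (ε : ℝ),
      (∑ m ∈ Finset.range (N+1), Bpmf m N ε * Pfr (Fintype.card F) m K)
        = ∑ m ∈ Finset.Icc K N, Bpmf m N ε * Pfr (Fintype.card F) m K := by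
    intro N ε
    symm
    apply Finset.sum_subset
    · intro m hm
      rw [Finset.mem_Icc] at hm
      exact Finset.mem_range.mpr (by omega)
    · intro m hm hnot
      rw [Finset.mem_range] at hm
      rw [Finset.mem_Icc] at hnot
      have hmK : m < K := by omega
      have hz : Pfr (Fintype.card F) m K = 0 := by
        rw [Pfr]
        exact Finset.prod_eq_zero (Finset.mem_range.mpr hmK)
          (by rw [sub_self, zpow_zero, sub_self])
      rw [hz, mul_zero]
  rw [bernoulli_sum NS εSR (fun m => Pfr (Fintype.card F) m K),
    bernoulli_sum NR εRD (fun m => Pfr (Fintype.card F) m K), tail NS εSR, tail NR εRD]
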